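/- In any one-page PQ-layout of an edge-weighted cycle ⟨C,w⟩, the vertex that is last (rightmost) in the linear ordering is incident to an edge of maximum weight among the edges of C. -/
import Mathlib

private lemma mod2Aux {n a : ℕ} (hn : 0 < n) (h : a < 2*n) :
    a % n = if a < n then a else a - n := by
  split
  · exact Nat.mod_eq_of_lt ‹_›
  · rw [Nat.mod_eq_sub_mod (by omega), Nat.mod_eq_of_lt (by omega)]

private lemma crossAux (g : ℕ → ℕ) (M : ℕ) :
    ∀ T, g 0 < M → M < g T → (∀ t, t ≤ T → g t ≠ M) →
    ∃ t, t < T ∧ g t < M ∧ M < g (t+1) := by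
  intro T
  induction T with
  | zero => intro h0 hT _; omega
  | succ T ih =>
    intro h0 hT hne
    rcases lt_or_ge M (g T) with h | h
    · obtain ⟨t, ht, h1, h2⟩ := ih h0 h (fun t htT => hne t (by omega))
      exact ⟨t, by omega, h1, h2⟩
    · have := hne T (by omega)
      exact ⟨T, by omega, by omega, hT⟩

/-- **The rightmost vertex of a one-page layout of a cycle is incident to a
maximum-weight edge.**  The cycle on `Fin n` has edges `{i, i+1}` (mod `n`) of
weight `w i`.  If `f` is an injective spine ordering admitting a one-page
PQ-layout (no forbidden configuration) and `z` is the rightmost vertex, then some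
edge incident to `z` has maximum weight among all edges of the cycle. -/
theorem cycle_last_vertex_heavy (n : ℕ) (hn : 3 ≤ n) (w : Fin n → ℝ)
    (f : Fin n → ℕ) (hf : Function.Injective f)
    (hvalid : ∀ i j : Fin n,
      min (f j) (f (j + (⟨1, by omega⟩ : Fin n))) < max (f i) (f (i + (⟨1, by omega⟩ : Fin n))) →
      max (f i) (f (i + (⟨1, by omega⟩ : Fin n))) < max (f j) (f (j + (⟨1, by omega⟩ : Fin n))) →
      w i ≤ w j)
    (z : Fin n) (hz : ∀ v, f v ≤ f z) :
    ∃ i : Fin n, (i = z ∨ i + (⟨1, by omega⟩ : Fin n) = z) ∧ ∀ j, w j ≤ w i := by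
  have hn0 : 0 < n := by omega
  set one : Fin n := ⟨1, by omega⟩ with hone
  set c : ℕ → Fin n := fun t => ⟨t % n, Nat.mod_lt _ hn0⟩ with hc
  have hcval : ∀ t, (c t).val = t % n := fun t => rfl
  have honeval : (one : Fin n).val = 1 := rfl
  have hcadd : ∀ m, c (m+1) = c m + one := by
    intro m
    apply Fin.ext
    rw [Fin.val_add, hcval, hcval, honeval]
    conv_rhs => rw [show (1:ℕ) = 1 % n from (Nat.mod_eq_of_lt (by omega)).symm]
    rw [← Nat.add_mod]
  -- choose a maximum-weight edge whose rightmost endpoint is as far right as possible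
  have hune : (Finset.univ : Finset (Fin n)).Nonempty := ⟨⟨0, hn0⟩, Finset.mem_univ _⟩
  obtain ⟨m, -, hm⟩ := Finset.exists_max_image Finset.univ w hune
  set S : Finset (Fin n) := Finset.univ.filter (fun i => ∀ j, w j ≤ w i) with hS
  have hmS : m ∈ S := by
    simp only [hS, Finset.mem_filter, Finset.mem_univ, true_and]
    exact fun j => hm j (Finset.mem_univ j)
  obtain ⟨i0, hi0S, htie⟩ := Finset.exists_max_image S (fun i => max (f i) (f (i+one))) ⟨m, hmS⟩
  have hW : ∀ j, w j ≤ w i0 := by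
    simpa only [hS, Finset.mem_filter, Finset.mem_univ, true_and] using hi0S
  set M := max (f i0) (f (i0+one)) with hM
  -- a spanning edge would contradict the choice of i0
  have hkey : ∀ j : Fin n, min (f j) (f (j+one)) < M → M < max (f j) (f (j+one)) → False := by
    intro j h1 h2
    have hww : w i0 ≤ w j := hvalid i0 j h1 h2
    have hjS : j ∈ S := by
      simp only [hS, Finset.mem_filter, Finset.mem_univ, true_and]
      exact fun k => le_trans (hW k) hww
    exact lt_irrefl M (lt_of_lt_of_le h2 (htie j hjS))
  rcases le_or_gt (f z) M with hzM | hzM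
  · -- then f z = M so z is an endpoint of edge i0
    have hMz : M = f z := le_antisymm (max_le (hz i0) (hz (i0+one))) hzM
    rcases max_choice (f i0) (f (i0+one)) with h | h
    · have he : f i0 = f z := by rw [← hMz]; exact h.symm
      exact ⟨i0, Or.inl (hf he), hW⟩
    · have he : f (i0+one) = f z := by rw [← hMz]; exact h.symm
      exact ⟨i0, Or.inr (hf he), hW⟩
  · -- otherwise derive a contradiction: find a spanning edge
    exfalso
    have hi0lt := i0.isLt
    have hzlt := z.isLt
    rcases lt_trichotomy (f i0) (f (i0+one)) with hcase | hcase | hcase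
    · -- v = i0 + one, walk backwards from i0
      have hMv : M = f (i0+one) := max_eq_right (le_of_lt hcase)
      have hvval : (i0+one).val = (i0.val + 1) % n := by rw [Fin.val_add, honeval]
      have hz_ne : z ≠ i0 + one := by
        intro h; rw [h] at hzM; omega
      have hzv : z.val ≠ (i0.val + 1) % n := by
        intro h; exact hz_ne (Fin.ext (h.trans hvval.symm))
      rw [mod2Aux hn0 (by omega)] at hzv
      obtain ⟨s, hs1, hs2⟩ : ∃ s, s ≤ n - 2 ∧ (i0.val + n - s) % n = z.val := by
        rcases le_or_gt z.val i0.val with h | h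
        · refine ⟨i0.val - z.val, ?_, ?_⟩
          · split at hzv <;> omega
          · rw [show i0.val + n - (i0.val - z.val) = z.val + n by omega,
              mod2Aux hn0 (by omega)]
            split <;> omega
        · refine ⟨i0.val + n - z.val, ?_, ?_⟩
          · split at hzv <;> omega
          · rw [show i0.val + n - (i0.val + n - z.val) = z.val by omega,
              mod2Aux hn0 (by omega)]
            split <;> omega
      have hg0 : c (i0.val + n - 0) = i0 := by
        apply Fin.ext
        rw [hcval, show i0.val + n - 0 = i0.val + n by omega, mod2Aux hn0 (by omega)]
        split <;> omega
      have hgs : c (i0.val + n - s) = z := Fin.ext (by rw [hcval, hs2])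
      have hne' : ∀ t, t ≤ s → f (c (i0.val + n - t)) ≠ M := by
        intro t ht h
        rw [hMv] at h
        have := congrArg Fin.val (hf h)
        rw [hcval, hvval, mod2Aux hn0 (by omega), mod2Aux hn0 (by omega)] at this
        split at this <;> split at this <;> omega
      obtain ⟨t, hts, h1, h2⟩ := crossAux (fun t => f (c (i0.val + n - t))) M s
        (by show f (c (i0.val + n - 0)) < M; rw [hg0]; omega)
        (by show M < f (c (i0.val + n - s)); rw [hgs]; omega) hne'
      set j : Fin n := c (i0.val + n - t - 1) with hj
      have hjone : j + one = c (i0.val + n - t) := by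
        rw [hj, ← hcadd, show i0.val + n - t - 1 + 1 = i0.val + n - t by omega]
      have hfj : f j = f (c (i0.val + n - (t+1))) := by
        rw [hj, show i0.val + n - (t+1) = i0.val + n - t - 1 by omega]
      refine hkey j ?_ ?_
      · rw [hjone]
        exact lt_of_le_of_lt (min_le_right _ _) h1
      · rw [← hfj] at h2
        exact lt_of_lt_of_le h2 (le_max_left _ _)
    · -- impossible: i0 = i0 + one
      have := congrArg Fin.val (hf hcase)
      rw [Fin.val_add, honeval, mod2Aux hn0 (by omega)] at this
      split at this <;> omega
    · -- v = i0, walk forwards from i0 + one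
      have hMv : M = f i0 := max_eq_left (le_of_lt hcase)
      have hvval : (i0+one).val = (i0.val + 1) % n := by rw [Fin.val_add, honeval]
      have hz_ne : z ≠ i0 := by
        intro h; rw [h] at hzM; omega
      have hzv : z.val ≠ i0.val := fun h => hz_ne (Fin.ext h)
      obtain ⟨s, hs1, hs2⟩ : ∃ s, s ≤ n - 2 ∧ (i0.val + 1 + s) % n = z.val := by
        rcases le_or_gt (i0.val + 1) z.val with h | h
        · refine ⟨z.val - i0.val - 1, by omega, ?_⟩
          rw [show i0.val + 1 + (z.val - i0.val - 1) = z.val by omega,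
            Nat.mod_eq_of_lt hzlt]
        · refine ⟨z.val + n - i0.val - 1, by omega, ?_⟩
          rw [show i0.val + 1 + (z.val + n - i0.val - 1) = z.val + n by omega,
            mod2Aux hn0 (by omega)]
          split <;> omega
      have hg0 : c (i0.val + 1 + 0) = i0 + one := by
        apply Fin.ext
        rw [hcval, hvval]
      have hgs : c (i0.val + 1 + s) = z := Fin.ext (by rw [hcval, hs2])
      have hne' : ∀ t, t ≤ s → f (c (i0.val + 1 + t)) ≠ M := by
        intro t ht h
        rw [hMv] at h
        have := congrArg Fin.val (hf h)
        rw [hcval, mod2Aux hn0 (by omega)] at this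
        split at this <;> omega
      obtain ⟨t, hts, h1, h2⟩ := crossAux (fun t => f (c (i0.val + 1 + t))) M s
        (by show f (c (i0.val + 1 + 0)) < M; rw [hg0]; omega)
        (by show M < f (c (i0.val + 1 + s)); rw [hgs]; omega) hne'
      set j : Fin n := c (i0.val + 1 + t) with hj
      have hjone : j + one = c (i0.val + 1 + (t+1)) := by
        rw [hj, ← hcadd, show i0.val + 1 + t + 1 = i0.val + 1 + (t+1) by omega]
      refine hkey j ?_ ?_
      · exact lt_of_le_of_lt (min_le_left _ _) h1
      · rw [hjone]
        exact lt_of_lt_of_le h2 (le_max_right _ _)
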